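/- Let (e_i)_{i∈I} and (f_i)_{i∈I} be normalized tight frames for Hilbert spaces H and K respectively. Then (e_i ⊕ f_i)_{i∈I} is a normalized tight frame for H ⊕ K if and only if Σ_{i∈I} ⟨g, e_i⟩⟨f_i, k⟩ = 0 for all g ∈ H, k ∈ K. -/

import Mathlib

open scoped InnerProductSpace

/-- Let `(e i)` and `(f i)` be normalized tight frames for Hilbert spaces
`H` and `K`.  Then `(e i ⊕ f i)` is a normalized tight frame for `H ⊕ K` if and only if
`∑ i ⟨g, e i⟩⟨f i, k⟩ = 0` for all `g ∈ H`, `k ∈ K`.  (Paper convention: inner products are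
linear in the first variable, so `⟨g, e i⟩⟨f i, k⟩ = ⟪e i, g⟫_ℂ * ⟪k, f i⟫_ℂ` in Mathlib's
convention.) -/
theorem stmt_4 {H K : Type*} [NormedAddCommGroup H] [InnerProductSpace ℂ H] [CompleteSpace H]
    [NormedAddCommGroup K] [InnerProductSpace ℂ K] [CompleteSpace K]
    {I : Type*} (e : I → H) (f : I → K)
    (hframeH : ∀ g : H, ∑' i : I, ‖⟪g, e i⟫_ℂ‖ ^ 2 = ‖g‖ ^ 2)
    (hframeK : ∀ k : K, ∑' i : I, ‖⟪k, f i⟫_ℂ‖ ^ 2 = ‖k‖ ^ 2) :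
    (∀ (g : H) (k : K),
        ∑' i : I, ‖⟪g, e i⟫_ℂ + ⟪k, f i⟫_ℂ‖ ^ 2 = ‖g‖ ^ 2 + ‖k‖ ^ 2)
      ↔ ∀ (g : H) (k : K), HasSum (fun i : I => ⟪e i, g⟫_ℂ * ⟪k, f i⟫_ℂ) 0 := by
  have sumH : ∀ g : H, Summable (fun i : I => ‖⟪g, e i⟫_ℂ‖ ^ 2) := by
    intro g
    by_contra h
    have h0 := hframeH g
    rw [tsum_eq_zero_of_not_summable h] at h0
    have hg : g = 0 := by
      have : ‖g‖ = 0 := by nlinarith [norm_nonneg g]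
      simpa using this
    subst hg
    exact h (by simpa [inner_zero_left] using summable_zero)
  have sumK : ∀ k : K, Summable (fun i : I => ‖⟪k, f i⟫_ℂ‖ ^ 2) := by
    intro k
    by_contra h
    have h0 := hframeK k
    rw [tsum_eq_zero_of_not_summable h] at h0
    have hk : k = 0 := by
      have : ‖k‖ = 0 := by nlinarith [norm_nonneg k]
      simpa using this
    subst hk
    exact h (by simpa [inner_zero_left] using summable_zero)
  have sumC : ∀ (g : H) (k : K),
      Summable (fun i : I => ⟪e i, g⟫_ℂ * ⟪k, f i⟫_ℂ) := by
    intro g k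
    apply Summable.of_norm
    apply Summable.of_nonneg_of_le (fun i => norm_nonneg _) (fun i => ?_)
      (((sumH g).add (sumK k)).mul_left (1 / 2 : ℝ))
    have h1 : ‖⟪e i, g⟫_ℂ * ⟪k, f i⟫_ℂ‖ = ‖⟪g, e i⟫_ℂ‖ * ‖⟪k, f i⟫_ℂ‖ := by
      rw [norm_mul, norm_inner_symm]
    rw [h1]
    nlinarith [sq_nonneg (‖⟪g, e i⟫_ℂ‖ - ‖⟪k, f i⟫_ℂ‖), norm_nonneg (⟪g, e i⟫_ℂ),
      norm_nonneg (⟪k, f i⟫_ℂ)]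
  have sumRe : ∀ (g : H) (k : K),
      Summable (fun i : I => (⟪e i, g⟫_ℂ * ⟪k, f i⟫_ℂ).re) :=
    fun g k => (Complex.hasSum_iff _ _ |>.mp (sumC g k).hasSum).1.summable
  have point : ∀ (g : H) (k : K) (i : I),
      ‖⟪g, e i⟫_ℂ + ⟪k, f i⟫_ℂ‖ ^ 2 =
        (‖⟪g, e i⟫_ℂ‖ ^ 2 + ‖⟪k, f i⟫_ℂ‖ ^ 2) +
          2 * (⟪e i, g⟫_ℂ * ⟪k, f i⟫_ℂ).re := by
    intro g k i
    have h := norm_add_sq (𝕜 := ℂ) (x := (⟪g, e i⟫_ℂ : ℂ)) (y := (⟪k, f i⟫_ℂ : ℂ))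
    have h2 : (⟪(⟪g, e i⟫_ℂ : ℂ), (⟪k, f i⟫_ℂ : ℂ)⟫_ℂ : ℂ)
        = ⟪e i, g⟫_ℂ * ⟪k, f i⟫_ℂ := by
      rw [RCLike.inner_apply, ← inner_conj_symm]
      simp
      ring
    rw [h, h2]
    ring_nf
    simp [Complex.re]
    ring
  have expand : ∀ (g : H) (k : K),
      ∑' i : I, ‖⟪g, e i⟫_ℂ + ⟪k, f i⟫_ℂ‖ ^ 2 =
        ‖g‖ ^ 2 + ‖k‖ ^ 2 + 2 * ∑' i : I, (⟪e i, g⟫_ℂ * ⟪k, f i⟫_ℂ).re := by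
    intro g k
    rw [tsum_congr (point g k), Summable.tsum_add ((sumH g).add (sumK k)) ((sumRe g k).mul_left 2),
      Summable.tsum_add (sumH g) (sumK k), hframeH, hframeK, tsum_mul_left]
  constructor
  · intro hsum g k
    have hre : ∀ (g : H) (k : K), ∑' i : I, (⟪e i, g⟫_ℂ * ⟪k, f i⟫_ℂ).re = 0 := by
      intro g k
      have := (expand g k).symm.trans (hsum g k)
      linarith
    have hT : (∑' i : I, ⟪e i, g⟫_ℂ * ⟪k, f i⟫_ℂ) = 0 := by
      have hrepart : (∑' i : I, ⟪e i, g⟫_ℂ * ⟪k, f i⟫_ℂ).re = 0 := by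
        rw [Complex.re_tsum (sumC g k)]; exact hre g k
      have himpart : (∑' i : I, ⟪e i, g⟫_ℂ * ⟪k, f i⟫_ℂ).im = 0 := by
        have key := hre ((Complex.I : ℂ) • g) k
        have : ∀ i : I, (⟪e i, (Complex.I : ℂ) • g⟫_ℂ * ⟪k, f i⟫_ℂ)
            = Complex.I * (⟪e i, g⟫_ℂ * ⟪k, f i⟫_ℂ) := by
          intro i
          rw [inner_smul_right]; ring
        rw [tsum_congr (fun i => by rw [this i])] at key
        have hsum' : Summable (fun i : I => Complex.I * (⟪e i, g⟫_ℂ * ⟪k, f i⟫_ℂ)) :=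
          (sumC g k).mul_left _
        have : ∀ i : I, (Complex.I * (⟪e i, g⟫_ℂ * ⟪k, f i⟫_ℂ)).re
            = -(⟪e i, g⟫_ℂ * ⟪k, f i⟫_ℂ).im := by
          intro i; simp [Complex.mul_re]
        rw [tsum_congr this] at key
        have := tsum_neg (L := SummationFilter.unconditional I) (f := fun i : I => (⟪e i, g⟫_ℂ * ⟪k, f i⟫_ℂ).im)
        rw [this] at key
        have him : ∑' i : I, (⟪e i, g⟫_ℂ * ⟪k, f i⟫_ℂ).im = 0 := by linarith [neg_eq_zero.mp key]
        rw [Complex.im_tsum (sumC g k)]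
        exact him
      exact Complex.ext hrepart himpart
    simpa [hT] using (sumC g k).hasSum
  · intro h g k
    have hre : ∑' i : I, (⟪e i, g⟫_ℂ * ⟪k, f i⟫_ℂ).re = 0 := by
      have := Complex.hasSum_iff _ _ |>.mp (h g k) |>.1
      simpa using this.tsum_eq
    rw [expand g k, hre]
    ring
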